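/- arXiv:1910.02271 — 2 statements merged into one kernel-verified Lean document; each statement's English description precedes it below -/
import Mathlib

section
/- Let α > 0 and n ≥ 1. Let J_n be the n×n complex tridiagonal matrix with diagonal entries (J_n)_{k,k} = −1 + (2k−1)/n for k = 1,…,n, off-diagonal entries (J_n)_{k,k+1} = (J_n)_{k+1,k} = iα for k = 1,…,n−1, and all other entries zero. Then for every z ∈ ℂ, (iα)^n · Q_n^{(α)}(z) = det(J_n − z·I_n), where I_n is the n×n identity matrix. In particular, the roots of Q_n^{(α)} coincide with the eigenvalues of J_n. -/
open Complex

/-- The Lommel polynomials `R_{n,ν}(x)` defined by the recurrence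
`R_{n+1,ν}(x) = (2(ν+n)/x) R_{n,ν}(x) − R_{n−1,ν}(x)` with `R_{−1,ν}(x) = 0`, `R_{0,ν}(x) = 1`. -/
noncomputable def lommelR (ν x : ℂ) : ℕ → ℂ
  | 0 => 1
  | 1 => 2 * ν / x
  | (n + 2) => 2 * (ν + (n + 1)) / x * lommelR ν x (n + 1) - lommelR ν x n

/-- `Q_n^{(α)}(z) := R_{n,(1−n−nz)/2}(iαn)`. -/
noncomputable def lommelQ (α : ℝ) (n : ℕ) (z : ℂ) : ℂ :=
  lommelR ((1 - (n : ℂ) - (n : ℂ) * z) / 2) (Complex.I * (α : ℂ) * (n : ℂ)) n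

/-- The `n×n` tridiagonal matrix `J_n` (`0`-indexed): diagonal entries
`-1 + (2k+1)/n` for `k = 0,…,n-1` (i.e. `-1 + (2k-1)/n` in `1`-indexed form),
and off-diagonal entries `iα` on the first super- and sub-diagonal. -/
noncomputable def Jmat (α : ℝ) (n : ℕ) : Matrix (Fin n) (Fin n) ℂ :=
  Matrix.of fun k l =>
    if (k : ℕ) = (l : ℕ) then -1 + (2 * ((k : ℕ) : ℂ) + 1) / (n : ℂ)
    else if (k : ℕ) + 1 = (l : ℕ) ∨ (l : ℕ) + 1 = (k : ℕ) then Complex.I * (α : ℂ)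
    else 0

/-! ### Auxiliary material: determinants of tridiagonal matrices -/

lemma val_succAbove {m : ℕ} (p : Fin (m+1)) (i : Fin m) :
    ((p.succAbove i) : ℕ) = if (i:ℕ) < (p:ℕ) then (i:ℕ) else (i:ℕ)+1 := by
  rcases lt_or_ge (i:ℕ) (p:ℕ) with h | h
  · rw [if_pos h, Fin.succAbove, if_pos (by simpa [Fin.lt_def] using h)]; rfl
  · rw [if_neg (not_lt.2 h), Fin.succAbove, if_neg (by simp [Fin.lt_def]; omega)]; rfl

noncomputable def triE (a : ℕ → ℂ) (b : ℂ) (i j : ℕ) : ℂ :=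
  if i = j then a i else if i + 1 = j ∨ j + 1 = i then b else 0

noncomputable def triMat (a : ℕ → ℂ) (b : ℂ) (m : ℕ) : Matrix (Fin m) (Fin m) ℂ :=
  Matrix.of fun k l => triE a b k l

lemma triMat_apply (a : ℕ → ℂ) (b : ℂ) (m : ℕ) (i j : Fin m) :
    triMat a b m i j = triE a b (i:ℕ) (j:ℕ) := rfl

lemma triE_of_far (a : ℕ → ℂ) (b : ℂ) {i j : ℕ} (h1 : i ≠ j) (h2 : i + 1 ≠ j) (h3 : j + 1 ≠ i) :
    triE a b i j = 0 := by
  rw [triE, if_neg h1, if_neg (by tauto)]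

lemma triE_diag (a : ℕ → ℂ) (b : ℂ) (i : ℕ) : triE a b i i = a i := by simp [triE]

lemma triE_off (a : ℕ → ℂ) (b : ℂ) {i j : ℕ} (h1 : i ≠ j) (h2 : i + 1 = j ∨ j + 1 = i) :
    triE a b i j = b := by rw [triE, if_neg h1, if_pos h2]

lemma triMat_submatrix_last (a : ℕ → ℂ) (b : ℂ) (m : ℕ) :
    (triMat a b (m+1)).submatrix (Fin.last m).succAbove (Fin.last m).succAbove
      = triMat a b m := by
  ext i j
  simp [triMat, Fin.succAbove_last, triE]

lemma triMat_det_zero (a : ℕ → ℂ) (b : ℂ) : (triMat a b 0).det = 1 := Matrix.det_fin_zero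

lemma triMat_det_one (a : ℕ → ℂ) (b : ℂ) : (triMat a b 1).det = a 0 := by
  simp [Matrix.det_fin_one, triMat, triE]

lemma triMat_det_rec (a : ℕ → ℂ) (b : ℂ) (k : ℕ) :
    (triMat a b (k+2)).det
      = a (k+1) * (triMat a b (k+1)).det - b^2 * (triMat a b k).det := by
  rw [Matrix.det_succ_row (triMat a b (k+2)) (Fin.last (k+1))]
  rw [Fin.sum_univ_castSucc, Fin.sum_univ_castSucc]
  have hz : ∀ i : Fin k,
      (-1:ℂ) ^ ((Fin.last (k+1) : ℕ) + (i.castSucc.castSucc : ℕ)) *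
          triMat a b (k+2) (Fin.last (k+1)) i.castSucc.castSucc *
        ((triMat a b (k+2)).submatrix (Fin.last (k+1)).succAbove
          i.castSucc.castSucc.succAbove).det = 0 := by
    intro i
    have hi := i.isLt
    rw [triMat_apply]
    rw [triE_of_far a b (by simp; omega) (by simp; omega) (by simp; omega)]
    ring
  rw [Finset.sum_eq_zero (fun i _ => hz i), zero_add]
  -- middle term
  set S := (triMat a b (k+2)).submatrix (Fin.last (k+1)).succAbove
      (Fin.last k).castSucc.succAbove with hS
  have hSapp : ∀ (i j : Fin (k+1)),
      S i j = triE a b (i:ℕ) (if (j:ℕ) < k then (j:ℕ) else (j:ℕ)+1) := by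
    intro i j
    rw [hS, Matrix.submatrix_apply, triMat_apply]
    congr 1
    · rw [val_succAbove]; simp [Fin.val_last]; have := i.isLt; omega
    · rw [val_succAbove]; simp
  have hSdet : S.det = b * (triMat a b k).det := by
    rw [Matrix.det_succ_column S (Fin.last k)]
    rw [Fin.sum_univ_castSucc]
    have hz2 : ∀ i : Fin k,
        (-1:ℂ) ^ ((i.castSucc : ℕ) + (Fin.last k : ℕ)) * S i.castSucc (Fin.last k) *
          ((S.submatrix i.castSucc.succAbove (Fin.last k).succAbove).det) = 0 := by
      intro i
      have hi := i.isLt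
      rw [hSapp]
      rw [if_neg (by simp [Fin.val_last])]
      rw [triE_of_far a b (by simp [Fin.val_last]; omega) (by simp [Fin.val_last]; omega)
        (by simp [Fin.val_last]; omega)]
      ring
    rw [Finset.sum_eq_zero (fun i _ => hz2 i), zero_add]
    have he : S (Fin.last k) (Fin.last k) = b := by
      rw [hSapp, if_neg (by simp [Fin.val_last])]
      exact triE_off a b (by simp [Fin.val_last]) (by simp [Fin.val_last])
    have hsub : S.submatrix (Fin.last k).succAbove (Fin.last k).succAbove = triMat a b k := by
      ext i j
      rw [Matrix.submatrix_apply, hSapp, triMat_apply]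
      have hi := i.isLt
      have hj := j.isLt
      rw [Fin.succAbove_last]
      rw [if_pos (by simp)]
      simp
    rw [he, hsub]
    have : (-1:ℂ) ^ ((Fin.last k : ℕ) + (Fin.last k : ℕ)) = 1 := by
      simp only [Fin.val_last]
      exact Even.neg_one_pow ⟨k, by ring⟩
    rw [this]; ring
  have hmid : triMat a b (k+2) (Fin.last (k+1)) (Fin.last k).castSucc = b := by
    rw [triMat_apply]
    exact triE_off a b (by simp) (by simp)
  have hsign : (-1:ℂ) ^ ((Fin.last (k+1) : ℕ) + ((Fin.last k).castSucc : ℕ)) = -1 := by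
    simp only [Fin.val_last, Fin.coe_castSucc]
    exact Odd.neg_one_pow ⟨k, by ring⟩
  have hlast : triMat a b (k+2) (Fin.last (k+1)) (Fin.last (k+1)) = a (k+1) := by
    rw [triMat_apply]; simp only [Fin.val_last]; exact triE_diag a b (k+1)
  have hsign2 : (-1:ℂ) ^ ((Fin.last (k+1) : ℕ) + ((Fin.last (k+1)) : ℕ)) = 1 := by
    simp only [Fin.val_last]
    exact Even.neg_one_pow ⟨k+1, by ring⟩
  rw [hmid, hsign, hsign2, hlast, hSdet, triMat_submatrix_last]
  ring

lemma two_step {P : ℕ → Prop} (h0 : P 0) (h1 : P 1)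
    (h : ∀ k, P k → P (k+1) → P (k+2)) : ∀ m, P m
  | 0 => h0
  | 1 => h1
  | (k+2) => h k (two_step h0 h1 h k) (two_step h0 h1 h (k+1))

lemma key (α : ℝ) (hα : α ≠ 0) (n : ℕ) (hn : 1 ≤ n) (z : ℂ) :
    ∀ m : ℕ, (triMat (fun k => -1 + (2*(k:ℂ)+1)/(n:ℂ) - z) (Complex.I * (α:ℂ)) m).det
      = (Complex.I * (α:ℂ))^m *
        lommelR ((1 - (n : ℂ) - (n : ℂ) * z) / 2) (Complex.I * (α : ℂ) * (n : ℂ)) m := by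
  have hn0 : (n:ℂ) ≠ 0 := Nat.cast_ne_zero.2 (by omega)
  have hb : Complex.I * (α:ℂ) ≠ 0 :=
    mul_ne_zero Complex.I_ne_zero (by exact_mod_cast hα)
  have hx : Complex.I * (α:ℂ) * (n:ℂ) ≠ 0 := mul_ne_zero hb hn0
  set ν := (1 - (n : ℂ) - (n : ℂ) * z) / 2 with hν
  set x := Complex.I * (α : ℂ) * (n : ℂ) with hxdef
  have hcoef : ∀ m : ℕ, Complex.I * (α:ℂ) * (2 * (ν + (m:ℂ)) / x)
      = -1 + (2*(m:ℂ)+1)/(n:ℂ) - z := by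
    intro m
    rw [hν, hxdef]
    have hα' : (α:ℂ) ≠ 0 := by exact_mod_cast hα
    field_simp
    ring
  refine two_step ?_ ?_ ?_
  · simp [triMat_det_zero, lommelR]
  · rw [triMat_det_one, lommelR, pow_one, ← hcoef 0]
    push_cast
    ring
  · intro k ih1 ih2
    rw [triMat_det_rec, ih1, ih2]
    show _ = _ * lommelR ν x (k+2)
    rw [lommelR]
    have := hcoef (k+1)
    push_cast at this ⊢
    rw [← this]
    ring

lemma Jmat_eq (α : ℝ) (n : ℕ) (z : ℂ) :
    Jmat α n - z • (1 : Matrix (Fin n) (Fin n) ℂ)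
      = triMat (fun k => -1 + (2*(k:ℂ)+1)/(n:ℂ) - z) (Complex.I * (α:ℂ)) n := by
  ext k l
  simp only [Matrix.sub_apply, Matrix.smul_apply, Matrix.one_apply, Jmat, triMat, triE,
    Matrix.of_apply, smul_eq_mul]
  by_cases h : (k:ℕ) = (l:ℕ)
  · have : k = l := Fin.ext h
    simp [h, this]
  · have : k ≠ l := fun hkl => h (by rw [hkl])
    simp [h, this]

theorem lommelQ_charpoly (α : ℝ) (hα : 0 < α) (n : ℕ) (hn : 1 ≤ n) :
    (∀ z : ℂ, (Complex.I * (α : ℂ)) ^ n * lommelQ α n z =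
      Matrix.det (Jmat α n - z • (1 : Matrix (Fin n) (Fin n) ℂ))) ∧
    (∀ z : ℂ, lommelQ α n z = 0 ↔
      Matrix.det (Jmat α n - z • (1 : Matrix (Fin n) (Fin n) ℂ)) = 0) := by
  have h1 : ∀ z : ℂ, (Complex.I * (α : ℂ)) ^ n * lommelQ α n z =
      Matrix.det (Jmat α n - z • (1 : Matrix (Fin n) (Fin n) ℂ)) := by
    intro z
    rw [Jmat_eq, key α hα.ne' n hn z n, lommelQ]
  refine ⟨h1, fun z => ?_⟩
  rw [← h1 z, mul_eq_zero]
  have hb : (Complex.I * (α:ℂ))^n ≠ 0 :=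
    pow_ne_zero _ (mul_ne_zero Complex.I_ne_zero (by exact_mod_cast hα.ne'))
  tauto
end

section
/- Let α > 0 and n ≥ 1. If z₀ ∈ ℂ satisfies Q_n^{(α)}(z₀) = 0, then |Re z₀| ≤ 1 − 1/n and |Im z₀| ≤ 2α·cos(π/(n+1)). Consequently, every root of every Q_n^{(α)} (n ≥ 1) lies in the open rectangle {z ∈ ℂ : |Re z| < 1, |Im z| < 2α}. -/
open Complex Real
open Finset

lemma wirtinger (n : ℕ) (hn : 1 ≤ n) (a : ℕ → ℝ) (ha : ∀ k, 0 ≤ a k) :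
    ∑ k ∈ Finset.range (n-1), 2 * (a k * a (k+1)) ≤
      2 * Real.cos (Real.pi/(n+1)) * ∑ k ∈ Finset.range n, (a k)^2 := by
  set θ := Real.pi/(n+1) with hθ
  have hθpos : 0 < θ := by positivity
  set s : ℕ → ℝ := fun k => Real.sin ((k+1)*θ) with hs
  have hsnn : ∀ k : ℕ, k ≤ n → 0 ≤ s k := by
    intro k hk
    apply Real.sin_nonneg_of_nonneg_of_le_pi
    · positivity
    · rw [hθ, mul_div_assoc', div_le_iff₀ (by positivity)]
      have : (k:ℝ)+1 ≤ (n:ℝ)+1 := by exact_mod_cast by omega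
      nlinarith [Real.pi_pos]
  have hspos : ∀ k : ℕ, k < n → 0 < s k := by
    intro k hk
    apply Real.sin_pos_of_pos_of_lt_pi
    · positivity
    · rw [hθ, mul_div_assoc', div_lt_iff₀ (by positivity)]
      have : (k:ℝ)+1 < (n:ℝ)+1 := by exact_mod_cast by omega
      nlinarith [Real.pi_pos]
  -- key sine identity
  have hid : ∀ k : ℕ, s (k+1) + Real.sin (k*θ) = 2 * Real.cos θ * s k := by
    intro k
    have h1 : ((k:ℝ)+1+1)*θ = (k+1)*θ + θ := by ring
    have h2 : (k:ℝ)*θ = (k+1)*θ - θ := by ring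
    simp only [hs]
    push_cast
    rw [h1, h2, Real.sin_add, Real.sin_sub]
    ring
  -- pointwise AM-GM
  have hpt : ∀ k ∈ range (n-1), 2 * (a k * a (k+1)) ≤
      s (k+1)/s k * a k^2 + s k/s (k+1) * a (k+1)^2 := by
    intro k hk
    rw [mem_range] at hk
    have h1 : 0 < s k := hspos k (by omega)
    have h2 : 0 < s (k+1) := hspos (k+1) (by omega)
    rw [div_mul_eq_mul_div, div_mul_eq_mul_div, div_add_div _ _ h1.ne' h2.ne',
      le_div_iff₀ (by positivity)]
    nlinarith [sq_nonneg (s (k+1) * a k - s k * a (k+1)), ha k, ha (k+1), mul_pos h1 h2]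
  calc ∑ k ∈ range (n-1), 2 * (a k * a (k+1))
      ≤ ∑ k ∈ range (n-1), (s (k+1)/s k * a k^2 + s k/s (k+1) * a (k+1)^2) :=
        sum_le_sum hpt
    _ = ∑ k ∈ range (n-1), s (k+1)/s k * a k^2
        + ∑ k ∈ range (n-1), (fun j : ℕ => Real.sin ((j:ℝ)*θ)/s j * a j ^2) (k+1) := by
        rw [← sum_add_distrib]
        apply sum_congr rfl
        intro k hk
        simp only [hs]
        push_cast
        ring_nf
    _ ≤ ∑ k ∈ range n, s (k+1)/s k * a k^2
        + ∑ k ∈ range (n-1), (fun j : ℕ => Real.sin ((j:ℝ)*θ)/s j * a j ^2) (k+1) := by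
        apply add_le_add_left
        apply sum_le_sum_of_subset_of_nonneg (range_subset_range.mpr (by omega))
        · intro k hk _
          rw [mem_range] at hk
          have h1 : 0 < s k := hspos k hk
          have h2 : 0 ≤ s (k+1) := hsnn (k+1) (by omega)
          positivity
    _ = ∑ k ∈ range n, s (k+1)/s k * a k^2
        + ∑ k ∈ range n, Real.sin (k*θ)/s k * a k ^2 := by
        congr 1
        have hrs := Finset.sum_range_succ' (fun j : ℕ => Real.sin ((j:ℝ)*θ)/s j * a j ^2) (n-1)
        have hn1 : n - 1 + 1 = n := by omega
        rw [hn1] at hrs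
        rw [hrs]
        norm_num
    _ = ∑ k ∈ range n, 2 * Real.cos θ * a k ^ 2 := by
        rw [← sum_add_distrib]
        apply sum_congr rfl
        intro k hk
        rw [mem_range] at hk
        have h1 : 0 < s k := hspos k hk
        have := hid k
        field_simp
        push_cast
        nlinarith [this]
    _ = 2 * Real.cos θ * ∑ k ∈ range n, (a k)^2 := by rw [mul_sum]

lemma lommelQ_bound (α : ℝ) (hα : 0 < α) (n : ℕ) (hn : 1 ≤ n) (z₀ : ℂ)
    (h : lommelQ α n z₀ = 0) :
    |z₀.re| ≤ 1 - 1 / (n : ℝ) ∧ |z₀.im| ≤ 2 * α * Real.cos (Real.pi / ((n : ℝ) + 1)) := by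
  obtain ⟨m, rfl⟩ : ∃ m, n = m + 1 := ⟨n - 1, (Nat.succ_pred_eq_of_pos hn).symm⟩
  set ν : ℂ := (1 - ((m+1 : ℕ) : ℂ) - ((m+1 : ℕ) : ℂ) * z₀) / 2 with hν
  set x : ℂ := Complex.I * (α : ℂ) * ((m+1 : ℕ) : ℂ) with hxdef
  have hx : x ≠ 0 := by
    simp only [hxdef]
    have h1 : (α:ℂ) ≠ 0 := by exact_mod_cast hα.ne'
    have h2 : ((m+1 : ℕ):ℂ) ≠ 0 := by exact_mod_cast (by omega : m+1 ≠ 0)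
    exact mul_ne_zero (mul_ne_zero Complex.I_ne_zero h1) h2
  set v : ℕ → ℂ := fun k => if k = 0 then 0 else lommelR ν x (k-1) with hvdef
  have hv0 : v 0 = 0 := rfl
  have hv : ∀ k : ℕ, v (k+1) = lommelR ν x k := by intro k; simp [hvdef]
  have hend : v (m+2) = 0 := by rw [hv (m+1)]; exact h
  have hrec : ∀ k : ℕ, ((m+1 : ℕ):ℂ) * z₀ * v (k+1)
      = (1 - ((m+1 : ℕ):ℂ) + 2*(k:ℂ)) * v (k+1) - x * v (k+2) - x * v k := by
    intro k
    rcases k with _ | k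
    · rw [hv 1, hv 0, hv0]
      simp only [lommelR]
      rw [hν]
      field_simp
      push_cast
      ring
    · rw [hv (k+2), hv (k+1), hv k]
      show _ = _ - x * (2 * (ν + ((k:ℂ) + 1)) / x * lommelR ν x (k + 1) - lommelR ν x k) - _
      rw [hν]
      field_simp
      push_cast
      ring
  set S : ℝ := ∑ k ∈ Finset.range (m+1), Complex.normSq (v (k+1)) with hSdef
  set A : ℝ := ∑ k ∈ Finset.range (m+1), ((1:ℝ) - (m+1 : ℕ) + 2*k) * Complex.normSq (v (k+1)) with hAdef
  set W : ℂ := ∑ k ∈ Finset.range m, (starRingEnd ℂ) (v (k+1)) * v (k+2) with hWdef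
  have hS : 0 < S := by
    rw [hSdef]
    apply Finset.sum_pos' (fun k _ => Complex.normSq_nonneg _)
    refine ⟨0, Finset.mem_range.mpr (by omega), ?_⟩
    rw [hv 0]; simp [lommelR]
  have e0 : ∑ k ∈ Finset.range (m+1), (starRingEnd ℂ) (v (k+1)) * v (k+1) = (S:ℂ) := by
    rw [hSdef]
    push_cast
    exact Finset.sum_congr rfl fun k _ => Complex.normSq_eq_conj_mul_self.symm
  have e2 : ∑ k ∈ Finset.range (m+1),
      (1 - ((m+1 : ℕ):ℂ) + 2*(k:ℂ)) * ((starRingEnd ℂ) (v (k+1)) * v (k+1)) = (A:ℂ) := by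
    rw [hAdef]
    push_cast
    exact Finset.sum_congr rfl fun k _ => by rw [← Complex.normSq_eq_conj_mul_self]
  have e3 : ∑ k ∈ Finset.range (m+1), (starRingEnd ℂ) (v (k+1)) * v (k+2) = W := by
    rw [Finset.sum_range_succ, hend, hWdef]
    simp
  have e4 : ∑ k ∈ Finset.range (m+1), (starRingEnd ℂ) (v (k+1)) * v k = (starRingEnd ℂ) W := by
    rw [Finset.sum_range_succ']
    simp only [hv0, mul_zero, add_zero]
    rw [hWdef, map_sum]
    exact Finset.sum_congr rfl fun k _ => by
      rw [map_mul, Complex.conj_conj]; ring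
  have hkey : ((m+1 : ℕ):ℂ) * z₀ * (S:ℂ) = (A:ℂ) - x * (W + (starRingEnd ℂ) W) := by
    calc ((m+1 : ℕ):ℂ) * z₀ * (S:ℂ)
        = ∑ k ∈ Finset.range (m+1), ((m+1 : ℕ):ℂ) * z₀ * ((starRingEnd ℂ) (v (k+1)) * v (k+1)) := by
          rw [← Finset.mul_sum, e0]
      _ = ∑ k ∈ Finset.range (m+1),
            ((1 - ((m+1 : ℕ):ℂ) + 2*(k:ℂ)) * ((starRingEnd ℂ) (v (k+1)) * v (k+1))
             - x * ((starRingEnd ℂ) (v (k+1)) * v (k+2)) - x * ((starRingEnd ℂ) (v (k+1)) * v k)) :=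
          Finset.sum_congr rfl fun k _ => by linear_combination (starRingEnd ℂ) (v (k+1)) * hrec k
      _ = (A:ℂ) - x * (W + (starRingEnd ℂ) W) := by
          rw [Finset.sum_sub_distrib, Finset.sum_sub_distrib, ← Finset.mul_sum, ← Finset.mul_sum,
            e2, e3, e4]
          ring
  rw [Complex.add_conj] at hkey
  have hre : ((m:ℝ)+1) * z₀.re * S = A := by
    have h5 := congrArg Complex.re hkey
    simp only [hxdef, Complex.mul_re, Complex.mul_im, Complex.I_re, Complex.I_im,
      Complex.ofReal_re, Complex.ofReal_im, Complex.sub_re, Complex.natCast_re,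
      Complex.natCast_im] at h5
    push_cast at h5 ⊢
    linarith
  have him : ((m:ℝ)+1) * z₀.im * S = -(α * ((m:ℝ)+1) * (2 * W.re)) := by
    have h6 := congrArg Complex.im hkey
    simp only [hxdef, Complex.mul_re, Complex.mul_im, Complex.I_re, Complex.I_im,
      Complex.ofReal_re, Complex.ofReal_im, Complex.sub_im, Complex.natCast_re,
      Complex.natCast_im] at h6
    push_cast at h6 ⊢
    linarith
  have hnS : 0 < ((m:ℝ)+1) * S := by positivity
  constructor
  · -- real part
    have hA : |A| ≤ (m:ℝ) * S := by
      rw [hAdef, hSdef, Finset.mul_sum]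
      refine (Finset.abs_sum_le_sum_abs _ _).trans (Finset.sum_le_sum fun k hk => ?_)
      rw [abs_mul, _root_.abs_of_nonneg (Complex.normSq_nonneg _)]
      apply mul_le_mul_of_nonneg_right _ (Complex.normSq_nonneg _)
      rw [abs_le]
      have hk' : (k:ℝ) ≤ m := by exact_mod_cast Nat.le_of_lt_succ (Finset.mem_range.mp hk)
      push_cast
      constructor <;> nlinarith [Nat.cast_nonneg (α := ℝ) k]
    have key : |z₀.re| * (((m:ℝ)+1) * S) ≤ (1 - 1/((m:ℝ)+1)) * (((m:ℝ)+1) * S) := by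
      have e : |z₀.re| * (((m:ℝ)+1) * S) = |((m:ℝ)+1) * z₀.re * S| := by
        rw [abs_mul, abs_mul, _root_.abs_of_nonneg (le_of_lt hS),
          _root_.abs_of_nonneg (by positivity : (0:ℝ) ≤ (m:ℝ)+1)]
        ring
      have e2 : (1 - 1/((m:ℝ)+1)) * (((m:ℝ)+1) * S) = (m:ℝ) * S := by
        field_simp
        ring
      rw [e, hre, e2]
      exact hA
    have h7 := le_of_mul_le_mul_right key hnS
    push_cast at h7 ⊢
    linarith
  · -- imaginary part
    have hWre : |2 * W.re| ≤ 2 * Real.cos (Real.pi / (((m+1:ℕ):ℝ) + 1)) * S := by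
      have w1 : ‖W‖ ≤ ∑ k ∈ Finset.range m,
          ‖v (k+1)‖ * ‖v (k+2)‖ := by
        rw [hWdef]
        refine (norm_sum_le _ _).trans (le_of_eq (Finset.sum_congr rfl fun k _ => ?_))
        rw [norm_mul, Complex.norm_conj]
      have w2 := wirtinger (m+1) (by omega) (fun k => ‖v (k+1)‖)
        (fun k => norm_nonneg _)
      simp only [Nat.add_sub_cancel] at w2
      have w3 : ∑ k ∈ Finset.range (m+1), (‖v (k+1)‖)^2 = S := by
        rw [hSdef]
        exact Finset.sum_congr rfl fun k _ => Complex.sq_norm _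
      rw [w3] at w2
      calc |2 * W.re| = 2 * |W.re| := by rw [abs_mul]; norm_num
        _ ≤ 2 * ‖W‖ := by linarith [Complex.abs_re_le_norm W]
        _ ≤ 2 * ∑ k ∈ Finset.range m, ‖v (k+1)‖ * ‖v (k+2)‖ := by
            linarith
        _ = ∑ k ∈ Finset.range m, 2 * (‖v (k+1)‖ * ‖v (k+2)‖) := by
            rw [Finset.mul_sum]
        _ ≤ 2 * Real.cos (Real.pi/((m+1:ℕ)+1)) * S := w2
        _ = 2 * Real.cos (Real.pi/(((m+1:ℕ):ℝ)+1)) * S := by norm_num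
    have key : |z₀.im| * (((m:ℝ)+1) * S)
        ≤ (2 * α * Real.cos (Real.pi / (((m+1:ℕ):ℝ) + 1))) * (((m:ℝ)+1) * S) := by
      have e : |z₀.im| * (((m:ℝ)+1) * S) = |((m:ℝ)+1) * z₀.im * S| := by
        rw [abs_mul, abs_mul, _root_.abs_of_nonneg (le_of_lt hS),
          _root_.abs_of_nonneg (by positivity : (0:ℝ) ≤ (m:ℝ)+1)]
        ring
      rw [e, him, abs_neg]
      calc |α * ((m:ℝ)+1) * (2 * W.re)| = α * ((m:ℝ)+1) * |2 * W.re| := by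
            rw [abs_mul, _root_.abs_of_nonneg (by positivity : (0:ℝ) ≤ α * ((m:ℝ)+1))]
        _ ≤ α * ((m:ℝ)+1) * (2 * Real.cos (Real.pi / (((m+1:ℕ):ℝ) + 1)) * S) := by
            apply mul_le_mul_of_nonneg_left hWre (by positivity)
        _ = (2 * α * Real.cos (Real.pi / (((m+1:ℕ):ℝ) + 1))) * (((m:ℝ)+1) * S) := by ring
    have h8 := le_of_mul_le_mul_right key hnS
    push_cast at h8 ⊢
    linarith

theorem lommelQ_root_localization (α : ℝ) (hα : 0 < α) :
    (∀ n : ℕ, 1 ≤ n → ∀ z₀ : ℂ, lommelQ α n z₀ = 0 →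
      |z₀.re| ≤ 1 - 1 / (n : ℝ) ∧ |z₀.im| ≤ 2 * α * Real.cos (Real.pi / ((n : ℝ) + 1))) ∧
    (∀ n : ℕ, 1 ≤ n → ∀ z : ℂ, lommelQ α n z = 0 →
      |z.re| < 1 ∧ |z.im| < 2 * α) := by
  refine ⟨fun n hn z₀ h => lommelQ_bound α hα n hn z₀ h, fun n hn z h => ?_⟩
  obtain ⟨h1, h2⟩ := lommelQ_bound α hα n hn z h
  have hn' : (0:ℝ) < n := by exact_mod_cast hn
  constructor
  · calc |z.re| ≤ 1 - 1/(n:ℝ) := h1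
      _ < 1 := by have : 0 < 1/(n:ℝ) := by positivity
                  linarith
  · have hcos : Real.cos (Real.pi / ((n:ℝ) + 1)) < 1 := by
      have h0 : (0:ℝ) < Real.pi / ((n:ℝ)+1) := by positivity
      have hle : Real.pi / ((n:ℝ)+1) ≤ Real.pi :=
        div_le_self Real.pi_pos.le (by linarith)
      have := Real.cos_lt_cos_of_nonneg_of_le_pi (le_refl 0) hle h0
      simpa using this
    calc |z.im| ≤ 2 * α * Real.cos (Real.pi / ((n:ℝ) + 1)) := h2
      _ < 2 * α := by nlinarith
end
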